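/- The bilinear map ψ on st₄(R) with values in W = (R₂)⁶ defined by ψ(X_{ij}(a), X_{kl}(b)) = ε_{θ(i,j,k,l)}(‾ab) for pairwise distinct i,j,k,l (and ψ = 0 on all other pairs of basis elements of the decomposition of st₄(R)) is a Lie algebra 2-cocycle: it is alternating and satisfies ψ([x,y],z) + ψ([y,z],x) + ψ([z,x],y) = 0. -/

import Mathlib

/-- The defining relations of the Steinberg Lie algebra `st_n(R)`, for a family of
`K`-linear maps `X i j : R → L` (playing the role of `a ↦ X_{ij}(a)`). -/
structure SteinbergRel (K R : Type) [CommRing K] [Ring R] [Algebra K R]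
    (n : ℕ) (L : Type) [LieRing L] [LieAlgebra K L]
    (X : Fin n → Fin n → R →ₗ[K] L) : Prop where
  bracket_mul : ∀ ⦃i j k : Fin n⦄, i ≠ j → j ≠ k → i ≠ k → ∀ a b : R,
    ⁅X i j a, X j k b⁆ = X i k (a * b)
  bracket_zero : ∀ ⦃i j k l : Fin n⦄, i ≠ j → k ≠ l → j ≠ k → i ≠ l → ∀ a b : R,
    ⁅X i j a, X k l b⁆ = 0

/-- `L` together with the family `X` *is* the Steinberg Lie algebra `st_n(R)`:
the relations hold, `L` is generated by the `X_{ij}(a)`, and `(L, X)` is initial among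
Lie algebras equipped with such a family. -/
structure IsSteinberg (K R : Type) [CommRing K] [Ring R] [Algebra K R]
    (n : ℕ) (L : Type) [LieRing L] [LieAlgebra K L]
    (X : Fin n → Fin n → R →ₗ[K] L) extends SteinbergRel K R n L X : Prop where
  span_top : LieSubalgebra.lieSpan K L
    (⋃ (i : Fin n) (j : Fin n) (_ : i ≠ j), Set.range (X i j)) = ⊤
  initial : ∀ (L' : Type) [LieRing L'] [LieAlgebra K L']
    (X' : Fin n → Fin n → R →ₗ[K] L'), SteinbergRel K R n L' X' →
    ∃ f : L →ₗ⁅K⁆ L', ∀ i j a, f (X i j a) = X' i j a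

private lemma sum_univ_four' {M : Type} [AddCommMonoid M] {i j k l : Fin 4}
    (hij : i ≠ j) (hik : i ≠ k) (hil : i ≠ l) (hjk : j ≠ k) (hjl : j ≠ l) (hkl : k ≠ l)
    (f : Fin 4 → M) : ∑ m, f m = f i + (f j + (f k + f l)) := by
  have huniv : (Finset.univ : Finset (Fin 4)) = {i, j, k, l} := by
    symm
    apply Finset.eq_univ_of_card
    rw [Finset.card_insert_of_notMem (by simp [hij, hik, hil]),
        Finset.card_insert_of_notMem (by simp [hjk, hjl]),
        Finset.card_insert_of_notMem (by simp [hkl]), Finset.card_singleton]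
    rfl
  rw [huniv, Finset.sum_insert (by simp [hij, hik, hil]),
      Finset.sum_insert (by simp [hjk, hjl]),
      Finset.sum_insert (by simp [hkl]), Finset.sum_singleton]

private def H0 : Subgroup (Equiv.Perm (Fin 4)) where
  carrier := {g | g = 1 ∨ g = Equiv.swap 0 2 ∨ g = Equiv.swap 1 3 ∨
    g = Equiv.swap 0 2 * Equiv.swap 1 3}
  one_mem' := Or.inl rfl
  mul_mem' := by
    rintro a b (rfl | rfl | rfl | rfl) (rfl | rfl | rfl | rfl) <;>
      simp only [Set.mem_setOf_eq] <;> decide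
  inv_mem' := by
    rintro a (rfl | rfl | rfl | rfl) <;> simp only [Set.mem_setOf_eq] <;> decide

private lemma mem_H0 {g : Equiv.Perm (Fin 4)} :
    g ∈ H0 ↔ (g = 1 ∨ g = Equiv.swap 0 2 ∨ g = Equiv.swap 1 3 ∨
      g = Equiv.swap 0 2 * Equiv.swap 1 3) := Iff.rfl

private lemma memH_iff (H : Subgroup (Equiv.Perm (Fin 4)))
    (hH : H = Subgroup.closure {Equiv.swap 0 2, Equiv.swap 1 3}) (g : Equiv.Perm (Fin 4)) :
    g ∈ H ↔ (g = 1 ∨ g = Equiv.swap 0 2 ∨ g = Equiv.swap 1 3 ∨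
      g = Equiv.swap 0 2 * Equiv.swap 1 3) := by
  subst hH
  constructor
  · intro hg
    have hle : Subgroup.closure {Equiv.swap (0:Fin 4) 2, Equiv.swap 1 3} ≤ H0 := by
      rw [Subgroup.closure_le]
      intro x hx
      rcases hx with rfl | hx
      · exact Or.inr (Or.inl rfl)
      · rw [Set.mem_singleton_iff] at hx; subst hx; exact Or.inr (Or.inr (Or.inl rfl))
    exact mem_H0.mp (hle hg)
  · rintro (rfl | rfl | rfl | rfl)
    · exact one_mem _
    · exact Subgroup.subset_closure (Set.mem_insert _ _)
    · exact Subgroup.subset_closure (Set.mem_insert_of_mem _ rfl)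
    · exact mul_mem (Subgroup.subset_closure (Set.mem_insert _ _))
        (Subgroup.subset_closure (Set.mem_insert_of_mem _ rfl))

open scoped Classical in
private lemma coset_filter (H : Subgroup (Equiv.Perm (Fin 4)))
    (hH : H = Subgroup.closure {Equiv.swap 0 2, Equiv.swap 1 3}) (σ : Equiv.Perm (Fin 4)) :
    Finset.filter
        (fun τ => (QuotientGroup.mk τ : Equiv.Perm (Fin 4) ⧸ H) = QuotientGroup.mk σ)
        Finset.univ
      = {σ, σ * Equiv.swap 0 2, σ * Equiv.swap 1 3,
          σ * (Equiv.swap 0 2 * Equiv.swap 1 3)} := by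
  ext τ
  simp only [Finset.mem_filter, Finset.mem_univ, true_and, Finset.mem_insert,
    Finset.mem_singleton]
  rw [QuotientGroup.eq, memH_iff H hH]
  constructor
  · rintro (h | h | h | h)
    · exact Or.inl (inv_mul_eq_one.mp h)
    · refine Or.inr (Or.inl ?_)
      have h1 : σ = τ * Equiv.swap 0 2 := by rw [← h]; group
      rw [h1, mul_assoc, show (Equiv.swap (0:Fin 4) 2) * Equiv.swap 0 2 = 1 by decide, mul_one]
    · refine Or.inr (Or.inr (Or.inl ?_))
      have h1 : σ = τ * Equiv.swap 1 3 := by rw [← h]; group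
      rw [h1, mul_assoc, show (Equiv.swap (1:Fin 4) 3) * Equiv.swap 1 3 = 1 by decide, mul_one]
    · refine Or.inr (Or.inr (Or.inr ?_))
      have h1 : σ = τ * (Equiv.swap 0 2 * Equiv.swap 1 3) := by rw [← h]; group
      rw [h1, mul_assoc,
        show (Equiv.swap (0:Fin 4) 2 * Equiv.swap 1 3) * (Equiv.swap 0 2 * Equiv.swap 1 3) = 1
          by decide, mul_one]
  · rintro (rfl | rfl | rfl | rfl)
    · exact Or.inl (by group)
    · refine Or.inr (Or.inl ?_)
      have h1 : (σ * Equiv.swap 0 2)⁻¹ * σ = (Equiv.swap (0:Fin 4) 2)⁻¹ := by group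
      rw [h1]; decide
    · refine Or.inr (Or.inr (Or.inl ?_))
      have h1 : (σ * Equiv.swap 1 3)⁻¹ * σ = (Equiv.swap (1:Fin 4) 3)⁻¹ := by group
      rw [h1]; decide
    · refine Or.inr (Or.inr (Or.inr ?_))
      have h1 : (σ * (Equiv.swap 0 2 * Equiv.swap 1 3))⁻¹ * σ
          = (Equiv.swap (0:Fin 4) 2 * Equiv.swap 1 3)⁻¹ := by group
      rw [h1]; decide

open scoped Classical in
private lemma coset_sum {M : Type} [AddCommMonoid M] (H : Subgroup (Equiv.Perm (Fin 4)))
    (hH : H = Subgroup.closure {Equiv.swap 0 2, Equiv.swap 1 3}) (σ : Equiv.Perm (Fin 4))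
    (f : Equiv.Perm (Fin 4) → M) :
    (∑ τ : Equiv.Perm (Fin 4),
        if (QuotientGroup.mk τ : Equiv.Perm (Fin 4) ⧸ H) = QuotientGroup.mk σ then f τ else 0)
      = f σ + (f (σ * Equiv.swap 0 2) + (f (σ * Equiv.swap 1 3) +
          f (σ * (Equiv.swap 0 2 * Equiv.swap 1 3)))) := by
  rw [← Finset.sum_filter, coset_filter H hH σ]
  rw [Finset.sum_insert (by
        simp only [Finset.mem_insert, Finset.mem_singleton]
        push_neg
        refine ⟨?_, ?_, ?_⟩ <;> intro h <;> exact absurd (left_eq_mul.mp h) (by decide)),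
      Finset.sum_insert (by
        simp only [Finset.mem_insert, Finset.mem_singleton]
        push_neg
        refine ⟨?_, ?_⟩ <;> intro h <;> exact absurd ((mul_right_inj σ).mp h) (by decide)),
      Finset.sum_insert (by
        simp only [Finset.mem_singleton]
        intro h
        exact absurd ((mul_right_inj σ).mp h) (by decide)),
      Finset.sum_singleton]

private lemma keyIdentity {K R : Type} [CommRing K] [Ring R] [Algebra K R]
    (I2 : Submodule K R)
    (h2g : ∀ x : R, 2 * x ∈ I2)
    (hcg : ∀ c x y : R, c * (x * y - y * x) ∈ I2)
    (hmulg : ∀ x y : R, x ∈ I2 → x * y ∈ I2)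
    (a b c : Matrix (Fin 4) (Fin 4) R) (i j k l : Fin 4)
    (hA : (a i i + (a j j + (a k k + a l l))) ∈ I2)
    (hB : (b i i + (b j j + (b k k + b l l))) ∈ I2)
    (hC : (c i i + (c j j + (c k k + c l l))) ∈ I2) :
    ((((a i i * b i j + (a i j * b j j + (a i k * b k j + a i l * b l j))) - (b i i * a i j + (b i j * a j j + (b i k * a k j + b i l * a l j)))) * c k l +
      (((a k i * b i j + (a k j * b j j + (a k k * b k j + a k l * b l j))) - (b k i * a i j + (b k j * a j j + (b k k * a k j + b k l * a l j)))) * c i l +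
      (((a i i * b i l + (a i j * b j l + (a i k * b k l + a i l * b l l))) - (b i i * a i l + (b i j * a j l + (b i k * a k l + b i l * a l l)))) * c k j +
      ((a k i * b i l + (a k j * b j l + (a k k * b k l + a k l * b l l))) - (b k i * a i l + (b k j * a j l + (b k k * a k l + b k l * a l l)))) * c i j))) +
      (((b i i * c i j + (b i j * c j j + (b i k * c k j + b i l * c l j))) - (c i i * b i j + (c i j * b j j + (c i k * b k j + c i l * b l j)))) * a k l +
      (((b k i * c i j + (b k j * c j j + (b k k * c k j + b k l * c l j))) - (c k i * b i j + (c k j * b j j + (c k k * b k j + c k l * b l j)))) * a i l +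
      (((b i i * c i l + (b i j * c j l + (b i k * c k l + b i l * c l l))) - (c i i * b i l + (c i j * b j l + (c i k * b k l + c i l * b l l)))) * a k j +
      ((b k i * c i l + (b k j * c j l + (b k k * c k l + b k l * c l l))) - (c k i * b i l + (c k j * b j l + (c k k * b k l + c k l * b l l)))) * a i j))) +
      (((c i i * a i j + (c i j * a j j + (c i k * a k j + c i l * a l j))) - (a i i * c i j + (a i j * c j j + (a i k * c k j + a i l * c l j)))) * b k l +
      (((c k i * a i j + (c k j * a j j + (c k k * a k j + c k l * a l j))) - (a k i * c i j + (a k j * c j j + (a k k * c k j + a k l * c l j)))) * b i l +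
      (((c i i * a i l + (c i j * a j l + (c i k * a k l + c i l * a l l))) - (a i i * c i l + (a i j * c j l + (a i k * c k l + a i l * c l l)))) * b k j +
      ((c k i * a i l + (c k j * a j l + (c k k * a k l + c k l * a l l))) - (a k i * c i l + (a k j * c j l + (a k k * c k l + a k l * c l l)))) * b i j)))) ∈ I2 := by
  have e : ((((a i i * b i j + (a i j * b j j + (a i k * b k j + a i l * b l j))) - (b i i * a i j + (b i j * a j j + (b i k * a k j + b i l * a l j)))) * c k l +
      (((a k i * b i j + (a k j * b j j + (a k k * b k j + a k l * b l j))) - (b k i * a i j + (b k j * a j j + (b k k * a k j + b k l * a l j)))) * c i l +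
      (((a i i * b i l + (a i j * b j l + (a i k * b k l + a i l * b l l))) - (b i i * a i l + (b i j * a j l + (b i k * a k l + b i l * a l l)))) * c k j +
      ((a k i * b i l + (a k j * b j l + (a k k * b k l + a k l * b l l))) - (b k i * a i l + (b k j * a j l + (b k k * a k l + b k l * a l l)))) * c i j))) +
      (((b i i * c i j + (b i j * c j j + (b i k * c k j + b i l * c l j))) - (c i i * b i j + (c i j * b j j + (c i k * b k j + c i l * b l j)))) * a k l +
      (((b k i * c i j + (b k j * c j j + (b k k * c k j + b k l * c l j))) - (c k i * b i j + (c k j * b j j + (c k k * b k j + c k l * b l j)))) * a i l +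
      (((b i i * c i l + (b i j * c j l + (b i k * c k l + b i l * c l l))) - (c i i * b i l + (c i j * b j l + (c i k * b k l + c i l * b l l)))) * a k j +
      ((b k i * c i l + (b k j * c j l + (b k k * c k l + b k l * c l l))) - (c k i * b i l + (c k j * b j l + (c k k * b k l + c k l * b l l)))) * a i j))) +
      (((c i i * a i j + (c i j * a j j + (c i k * a k j + c i l * a l j))) - (a i i * c i j + (a i j * c j j + (a i k * c k j + a i l * c l j)))) * b k l +
      (((c k i * a i j + (c k j * a j j + (c k k * a k j + c k l * a l j))) - (a k i * c i j + (a k j * c j j + (a k k * c k j + a k l * c l j)))) * b i l +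
      (((c i i * a i l + (c i j * a j l + (c i k * a k l + c i l * a l l))) - (a i i * c i l + (a i j * c j l + (a i k * c k l + a i l * c l l)))) * b k j +
      ((c k i * a i l + (c k j * a j l + (c k k * a k l + c k l * a l l))) - (a k i * c i l + (a k j * c j l + (a k k * c k l + a k l * c l l)))) * b i j)))) =
      (a i i + (a j j + (a k k + a l l))) * (b i j * c k l + b i l * c k j + b k j * c i l + b k l * c i j) +
      ((b i i + (b j j + (b k k + b l l))) * (a i j * c k l + a i l * c k j + a k j * c i l + a k l * c i j) +
      ((c i i + (c j j + (c k k + c l l))) * (a i j * b k l + a i l * b k j + a k j * b i l + a k l * b i j) +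
      (b i k * (c k l * a k j - a k j * c k l) +
      (1:R) * (c k l * (b i l * a l j) - (b i l * a l j) * c k l) +
      c k l * (a l j * b i l - b i l * a l j) +
      b k i * (c i l * a i j - a i j * c i l) +
      (1:R) * (c i l * (b k l * a l j) - (b k l * a l j) * c i l) +
      c i l * (a l j * b k l - b k l * a l j) +
      (1:R) * (c k j * (b i j * a j l) - (b i j * a j l) * c k j) +
      c k j * (a j l * b i j - b i j * a j l) +
      b i k * (c k j * a k l - a k l * c k j) +
      b k i * (c i j * a i l - a i l * c i j) +
      (1:R) * (c i j * (b k j * a j l) - (b k j * a j l) * c i j) +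
      c i j * (a j l * b k j - b k j * a j l) +
      b i i * (c i j * a k l - a k l * c i j) +
      (1:R) * (b i l * (a k l * c l j) - (a k l * c l j) * b i l) +
      b i l * (c l j * a k l - a k l * c l j) +
      b k k * (c k j * a i l - a i l * c k j) +
      (1:R) * (b k l * (a i l * c l j) - (a i l * c l j) * b k l) +
      b k l * (c l j * a i l - a i l * c l j) +
      b i i * (c i l * a k j - a k j * c i l) +
      (1:R) * (b i j * (a k j * c j l) - (a k j * c j l) * b i j) +
      b i j * (c j l * a k j - a k j * c j l) +
      (1:R) * (b k j * (a i j * c j l) - (a i j * c j l) * b k j) +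
      b k j * (c j l * a i j - a i j * c j l) +
      b k k * (c k l * a i j - a i j * c k l) +
      (1:R) * (c i j * (a j j * b k l) - (a j j * b k l) * c i j) +
      (1:R) * (c k j * (a j j * b i l) - (a j j * b i l) * c k j) +
      (1:R) * (c i l * (a l l * b k j) - (a l l * b k j) * c i l) +
      (1:R) * (c k l * (a l l * b i j) - (a l l * b i j) * c k l) -
      (1:R) * ((b j j * c k l) * a i j - a i j * (b j j * c k l)) -
      b j j * (a i j * c k l - c k l * a i j) -
      a i k * (c k l * b k j - b k j * c k l) -
      (1:R) * (c k l * (a i l * b l j) - (a i l * b l j) * c k l) -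
      c k l * (b l j * a i l - a i l * b l j) -
      (1:R) * ((b i j * c k l) * a j j - a j j * (b i j * c k l)) -
      b i j * (a j j * c k l - c k l * a j j) -
      a k i * (c i l * b i j - b i j * c i l) -
      (1:R) * ((b j j * c i l) * a k j - a k j * (b j j * c i l)) -
      b j j * (a k j * c i l - c i l * a k j) -
      (1:R) * (c i l * (a k l * b l j) - (a k l * b l j) * c i l) -
      c i l * (b l j * a k l - a k l * b l j) -
      (1:R) * ((b k j * c i l) * a j j - a j j * (b k j * c i l)) -
      b k j * (a j j * c i l - c i l * a j j) -
      (1:R) * (c k j * (a i j * b j l) - (a i j * b j l) * c k j) -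
      c k j * (b j l * a i j - a i j * b j l) -
      a i k * (c k j * b k l - b k l * c k j) -
      (1:R) * ((b l l * c k j) * a i l - a i l * (b l l * c k j)) -
      b l l * (a i l * c k j - c k j * a i l) -
      (1:R) * ((b i l * c k j) * a l l - a l l * (b i l * c k j)) -
      b i l * (a l l * c k j - c k j * a l l) -
      a k i * (c i j * b i l - b i l * c i j) -
      (1:R) * (c i j * (a k j * b j l) - (a k j * b j l) * c i j) -
      c i j * (b j l * a k j - a k j * b j l) -
      (1:R) * ((b l l * c i j) * a k l - a k l * (b l l * c i j)) -
      b l l * (a k l * c i j - c i j * a k l) -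
      (1:R) * ((b k l * c i j) * a l l - a l l * (b k l * c i j)) -
      b k l * (a l l * c i j - c i j * a l l) -
      (1:R) * ((c j j * a k l) * b i j - b i j * (c j j * a k l)) -
      c i i * (b i j * a k l - a k l * b i j) -
      (1:R) * (c i j * (b j j * a k l) - (b j j * a k l) * c i j) -
      c i k * (b k j * a k l - a k l * b k j) -
      (1:R) * ((c j j * a i l) * b k j - b k j * (c j j * a i l)) -
      c k i * (b i j * a i l - a i l * b i j) -
      (1:R) * (c k j * (b j j * a i l) - (b j j * a i l) * c k j) -
      c k k * (b k j * a i l - a i l * b k j) -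
      (1:R) * ((c l l * a k j) * b i l - b i l * (c l l * a k j)) -
      c i i * (b i l * a k j - a k j * b i l) -
      c i k * (b k l * a k j - a k j * b k l) -
      (1:R) * (c i l * (b l l * a k j) - (b l l * a k j) * c i l) -
      (1:R) * ((c l l * a i j) * b k l - b k l * (c l l * a i j)) -
      c k i * (b i l * a i j - a i j * b i l) -
      c k k * (b k l * a i j - a i j * b k l) -
      (1:R) * (c k l * (b l l * a i j) - (b l l * a i j) * c k l) -
      a i i * (c i j * b k l - b k l * c i j) -
      (1:R) * ((c j j * b k l) * a i j - a i j * (c j j * b k l)) -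
      c j j * (a i j * b k l - b k l * a i j) -
      (1:R) * ((c j j * b i l) * a k j - a k j * (c j j * b i l)) -
      c j j * (a k j * b i l - b i l * a k j) -
      a k k * (c k j * b i l - b i l * c k j) -
      a i i * (c i l * b k j - b k j * c i l) -
      (1:R) * ((c l l * b k j) * a i l - a i l * (c l l * b k j)) -
      c l l * (a i l * b k j - b k j * a i l) -
      a k k * (c k l * b i j - b i j * c k l) -
      (1:R) * ((c l l * b i j) * a k l - a k l * (c l l * b i j)) -
      c l l * (a k l * b i j - b i j * a k l) -
      2 * (b i i * a i j * c k l) -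
      2 * (a j j * b i j * c k l) -
      2 * (a j j * b k j * c i l) -
      2 * (b k k * a k j * c i l) -
      2 * (b i i * a i l * c k j) -
      2 * (a l l * b i l * c k j) -
      2 * (b k k * a k l * c i j) -
      2 * (a l l * b k l * c i j) -
      2 * (c i i * a k l * b i j) -
      2 * (b j j * a k l * c i j) -
      2 * (b j j * a i l * c k j) -
      2 * (c k k * a i l * b k j) -
      2 * (c i i * a k j * b i l) -
      2 * (b l l * a k j * c i l) -
      2 * (c k k * a i j * b k l) -
      2 * (b l l * a i j * c k l) -
      2 * (a i i * b k l * c i j) -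
      2 * (a i j * c j j * b k l) -
      2 * (a k j * c j j * b i l) -
      2 * (a k k * b i l * c k j) -
      2 * (a i i * b k j * c i l) -
      2 * (a i l * c l l * b k j) -
      2 * (a k k * b i j * c k l) -
      2 * (a k l * c l l * b i j)))) := by noncomm_ring
  rw [e]
  exact add_mem (hmulg _ _ hA) (add_mem (hmulg _ _ hB) (add_mem (hmulg _ _ hC)
    (sub_mem (sub_mem (sub_mem (sub_mem (sub_mem (sub_mem (sub_mem (sub_mem (sub_mem (sub_mem (sub_mem (sub_mem (sub_mem (sub_mem (sub_mem (sub_mem (sub_mem (sub_mem (sub_mem (sub_mem (sub_mem (sub_mem (sub_mem (sub_mem (sub_mem (sub_mem (sub_mem (sub_mem (sub_mem (sub_mem (sub_mem (sub_mem (sub_mem (sub_mem (sub_mem (sub_mem (sub_mem (sub_mem (sub_mem (sub_mem (sub_mem (sub_mem (sub_mem (sub_mem (sub_mem (sub_mem (sub_mem (sub_mem (sub_mem (sub_mem (sub_mem (sub_mem (sub_mem (sub_mem (sub_mem (sub_mem (sub_mem (sub_mem (sub_mem (sub_mem (sub_mem (sub_mem (sub_mem (sub_mem (sub_mem (sub_mem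 (sub_mem (sub_mem (sub_mem (sub_mem (sub_mem (sub_mem (sub_mem (sub_mem (sub_mem (sub_mem (sub_mem (sub_mem (sub_mem (sub_mem (add_mem (add_mem (add_mem (add_mem (add_mem (add_mem (add_mem (add_mem (add_mem (add_mem (add_mem (add_mem (add_mem (add_mem (add_mem (add_mem (add_mem (add_mem (add_mem (add_mem (add_mem (add_mem (add_mem (add_mem (add_mem (add_mem (add_mem (hcg _ _ _) (hcg _ _ _)) (hcg _ _ _)) (hcg _ _ _)) (hcg _ _ _)) (hcg _ _ _)) (hcg _ _ _)) (hcg _ _ _)) (hcg _ _ _)) (hcg _ _ _)) (hcg _ _ _)) (hcg _ _ _)) (hcg _ _ _)) (hcg _ _ _)) (hcg _ _ _)) (hcg _ _ _)) (hcg _ _ _)) (hcg _ _ _)) (hcg _ _ _)) (hcg _ _ _)) (hcg _ _ _)) (hcg _ _ _)) (hcg _ _ _)) (hcg _ _ _)) (hcg _ _ _)) (hcg _ _ _)) (hcg _ _ _)) (hcg _ _ _)) (hcg _ _ _)) (hcg _ _ _)) (hcg _ _ _)) (hcg _ _ _)) (hcg _ _ _)) (hcg _ _ _)) (hcg _ _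 _)) (hcg _ _ _)) (hcg _ _ _)) (hcg _ _ _)) (hcg _ _ _)) (hcg _ _ _)) (hcg _ _ _)) (hcg _ _ _)) (hcg _ _ _)) (hcg _ _ _)) (hcg _ _ _)) (hcg _ _ _)) (hcg _ _ _)) (hcg _ _ _)) (hcg _ _ _)) (hcg _ _ _)) (hcg _ _ _)) (hcg _ _ _)) (hcg _ _ _)) (hcg _ _ _)) (hcg _ _ _)) (hcg _ _ _)) (hcg _ _ _)) (hcg _ _ _)) (hcg _ _ _)) (hcg _ _ _)) (hcg _ _ _)) (hcg _ _ _)) (hcg _ _ _)) (hcg _ _ _)) (hcg _ _ _)) (hcg _ _ _)) (hcg _ _ _)) (hcg _ _ _)) (hcg _ _ _)) (hcg _ _ _)) (hcg _ _ _)) (hcg _ _ _)) (hcg _ _ _)) (hcg _ _ _)) (hcg _ _ _)) (hcg _ _ _)) (hcg _ _ _)) (hcg _ _ _)) (hcg _ _ _)) (hcg _ _ _)) (hcg _ _ _)) (hcg _ _ _)) (hcg _ _ _)) (hcg _ _ _)) (h2g _)) (h2g _)) (h2g _)) (h2g _)) (h2g _)) (h2g _)) (h2g _)) (h2g _)) (h2g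 _)) (h2g _)) (h2g _)) (h2g _)) (h2g _)) (h2g _)) (h2g _)) (h2g _)) (h2g _)) (h2g _)) (h2g _)) (h2g _)) (h2g _)) (h2g _)) (h2g _)) (h2g _))))

set_option maxHeartbeats 8000000 in
open scoped Classical in
/-- The bilinear map `ψ` on `st₄(R)` with values in `W = (R₂)⁶` (six copies of
`R₂ = R/(2R + R[R,R])`, indexed by the six left cosets of the Klein four-group
`H = {1,(13),(24),(13)(24)}` in `S₄`), defined by
`ψ(X_{ij}(a), X_{kl}(b)) = ε_{θ(i,j,k,l)}(‾ab)` for pairwise distinct `i,j,k,l` and `ψ = 0`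
on all other pairs coming from the standard decomposition of `st₄(R)`, is an alternating
2-cocycle. Here a pairwise distinct quadruple is written `(σ 0, σ 1, σ 2, σ 3)` for
`σ ∈ S₄`, and `θ(i,j,k,l)` is the coset `σH`. -/
theorem steinberg_st4_cocycle (K R L : Type) [CommRing K] [Ring R] [Algebra K R]
    [LieRing L] [LieAlgebra K L]
    (hbasis : ∃ (ι : Type) (b : Module.Basis ι K R) (i₀ : ι), b i₀ = 1)
    (X : Fin 4 → Fin 4 → R →ₗ[K] L) (hst : IsSteinberg K R 4 L X)
    (I2 : Submodule K R)
    (hI2 : I2 = Submodule.span K {x : R | ∃ a : R, x = 2 * a} ⊔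
      Submodule.span K {x : R | ∃ c a b : R, x = c * (a * b - b * a)})
    (H : Subgroup (Equiv.Perm (Fin 4)))
    (hH : H = Subgroup.closure {Equiv.swap 0 2, Equiv.swap 1 3}) :
    ∃ ψ : L →ₗ[K] L →ₗ[K] ((Equiv.Perm (Fin 4) ⧸ H) → R ⧸ I2),
      -- values on pairs of generators with pairwise distinct indices
      (∀ (σ : Equiv.Perm (Fin 4)) (a b : R),
        ψ (X (σ 0) (σ 1) a) (X (σ 2) (σ 3) b)
          = Function.update (0 : (Equiv.Perm (Fin 4) ⧸ H) → R ⧸ I2)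
              (QuotientGroup.mk σ) (Submodule.Quotient.mk (a * b))) ∧
      -- `ψ` vanishes on the other pairs of generators
      (∀ i j k l : Fin 4, i ≠ j → k ≠ l → ¬(j ≠ k ∧ i ≠ l ∧ i ≠ k ∧ j ≠ l) →
        ∀ a b : R, ψ (X i j a) (X k l b) = 0) ∧
      -- `ψ` vanishes on the subalgebra `𝔗`
      (∀ i j : Fin 4, i ≠ j → ∀ a b : R, ∀ x : L, ψ ⁅X i j a, X j i b⁆ x = 0) ∧
      -- `ψ` is alternating
      (∀ x : L, ψ x x = 0) ∧
      -- cocycle identity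
      (∀ x y z : L, ψ ⁅x, y⁆ z + ψ ⁅y, z⁆ x + ψ ⁅z, x⁆ y = 0) := by
  classical
  letI : LieRing (Matrix (Fin 4) (Fin 4) R) := LieRing.ofAssociativeRing
  -- the matrix representation
  let Xm : Fin 4 → Fin 4 → R →ₗ[K] Matrix (Fin 4) (Fin 4) R := fun i j =>
    { toFun := fun a => Matrix.single i j a
      map_add' := fun a b => Matrix.single_add i j a b
      map_smul' := fun k a => by simp [Matrix.smul_single] }
  have hrel : SteinbergRel K R 4 (Matrix (Fin 4) (Fin 4) R) Xm := by
    constructor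
    · intro i j k hij hjk hik a b
      show ⁅Matrix.single i j a, Matrix.single j k b⁆
        = Matrix.single i k (a * b)
      rw [Ring.lie_def, Matrix.single_mul_single_same,
        Matrix.single_mul_single_of_ne (h := Ne.symm hik), sub_zero]
    · intro i j k l hij hkl hjk hil a b
      show ⁅Matrix.single i j a, Matrix.single k l b⁆ = 0
      rw [Ring.lie_def, Matrix.single_mul_single_of_ne (h := hjk),
        Matrix.single_mul_single_of_ne (h := Ne.symm hil), sub_zero]
  obtain ⟨φ, hφ⟩ := hst.initial (Matrix (Fin 4) (Fin 4) R) Xm hrel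
  have hφ' : ∀ i j a, φ (X i j a) = Matrix.single i j a := hφ
  -- membership facts for I2
  have h2g : ∀ x : R, 2 * x ∈ I2 := fun x => by
    rw [hI2]; exact Submodule.mem_sup_left (Submodule.subset_span ⟨x, rfl⟩)
  have hcg : ∀ c x y : R, c * (x * y - y * x) ∈ I2 := fun c x y => by
    rw [hI2]; exact Submodule.mem_sup_right (Submodule.subset_span ⟨c, x, y, rfl⟩)
  have hc1 : ∀ x y : R, x * y - y * x ∈ I2 := fun x y => by
    have h := hcg 1 x y; rwa [one_mul] at h
  have hpair : ∀ x y : R, x * y + y * x ∈ I2 := fun x y => by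
    have he : x * y + y * x = (x * y - y * x) + 2 * (y * x) := by noncomm_ring
    rw [he]; exact add_mem (hc1 x y) (h2g _)
  have hmulg : ∀ x y : R, x ∈ I2 → x * y ∈ I2 := by
    intro x y hx
    rw [hI2, ← Submodule.span_union] at hx
    rw [hI2, ← Submodule.span_union]
    induction hx using Submodule.span_induction with
    | mem z hz =>
        rcases hz with ⟨a, rfl⟩ | ⟨c, a, b, rfl⟩
        · rw [mul_assoc]
          exact Submodule.subset_span (Or.inl ⟨a * y, rfl⟩)
        · have he : c * (a * b - b * a) * y
              = c * (a * (b * y) - (b * y) * a) - (c * b) * (a * y - y * a) := by noncomm_ring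
          rw [he]
          exact sub_mem (Submodule.subset_span (Or.inr ⟨c, a, b * y, rfl⟩))
            (Submodule.subset_span (Or.inr ⟨c * b, a, y, rfl⟩))
    | zero => rw [zero_mul]; exact zero_mem _
    | add u v _ _ hu hv => rw [add_mul]; exact add_mem hu hv
    | smul k u _ hu => rw [smul_mul_assoc]; exact Submodule.smul_mem _ _ hu
  -- the trace of every element of the image of φ lies in I2
  have htr : ∀ x : L, (∑ m : Fin 4, (φ x : Matrix (Fin 4) (Fin 4) R) m m) ∈ I2 := by
    let Tsub : Submodule K (Matrix (Fin 4) (Fin 4) R) :=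
      { carrier := {M | (∑ m : Fin 4, M m m) ∈ I2}
        add_mem' := by
          intro a b ha hb
          simp only [Set.mem_setOf_eq, Matrix.add_apply] at *
          rw [Finset.sum_add_distrib]
          exact add_mem ha hb
        zero_mem' := by
          simp only [Set.mem_setOf_eq, Matrix.zero_apply, Finset.sum_const_zero]
          exact zero_mem _
        smul_mem' := by
          intro k M hM
          simp only [Set.mem_setOf_eq, Matrix.smul_apply] at *
          rw [← Finset.smul_sum]
          exact Submodule.smul_mem _ _ hM }
    let T : LieSubalgebra K (Matrix (Fin 4) (Fin 4) R) :=
      { Tsub with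
        lie_mem' := by
          intro x y _ _
          show (∑ m : Fin 4, (⁅x, y⁆ : Matrix (Fin 4) (Fin 4) R) m m) ∈ I2
          have e : (∑ m : Fin 4, (⁅x, y⁆ : Matrix (Fin 4) (Fin 4) R) m m)
              = ∑ p : Fin 4, ∑ m : Fin 4, (x p m * y m p - y m p * x p m) := by
            simp only [Ring.lie_def, Matrix.sub_apply, Matrix.mul_apply,
              Finset.sum_sub_distrib]
            congr 1
            exact Finset.sum_comm
          rw [e]
          exact Submodule.sum_mem _ fun p _ => Submodule.sum_mem _ fun m _ => hc1 _ _ }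
    intro x
    have hx : x ∈ LieSubalgebra.lieSpan K L
        (⋃ (i : Fin 4) (j : Fin 4) (_ : i ≠ j), Set.range (X i j)) := by
      rw [hst.span_top]; exact LieSubalgebra.mem_top x
    have hle : LieSubalgebra.lieSpan K L
        (⋃ (i : Fin 4) (j : Fin 4) (_ : i ≠ j), Set.range (X i j))
        ≤ LieSubalgebra.comap φ T := by
      rw [LieSubalgebra.lieSpan_le]
      intro z hz
      simp only [Set.mem_iUnion, Set.mem_range] at hz
      obtain ⟨i, j, hij, a, rfl⟩ := hz
      show φ (X i j a) ∈ T
      rw [hφ']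
      show (∑ m : Fin 4, Matrix.single i j a m m) ∈ I2
      rw [Finset.sum_eq_zero (fun m _ => Matrix.single_apply_of_ne _ _ _ _ _
        (by rintro ⟨rfl, rfl⟩; exact hij rfl))]
      exact zero_mem _
    exact hle hx
  -- the bilinear form on matrices
  have hB2ex : ∃ B2 : Matrix (Fin 4) (Fin 4) R →ₗ[K] Matrix (Fin 4) (Fin 4) R →ₗ[K]
      ((Equiv.Perm (Fin 4) ⧸ H) → R ⧸ I2), ∀ M N q, B2 M N q
        = I2.mkQ (∑ τ : Equiv.Perm (Fin 4),
            if (QuotientGroup.mk τ : Equiv.Perm (Fin 4) ⧸ H) = q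
            then M (τ 0) (τ 1) * N (τ 2) (τ 3) else 0) := by
    refine ⟨LinearMap.mk₂ K (fun M N q => I2.mkQ (∑ τ : Equiv.Perm (Fin 4),
      if (QuotientGroup.mk τ : Equiv.Perm (Fin 4) ⧸ H) = q
      then M (τ 0) (τ 1) * N (τ 2) (τ 3) else 0)) ?_ ?_ ?_ ?_, fun M N q => rfl⟩
    · intro M M' N
      funext q
      show I2.mkQ _ = I2.mkQ _ + I2.mkQ _
      rw [← map_add]
      congr 1
      rw [← Finset.sum_add_distrib]
      refine Finset.sum_congr rfl fun τ _ => ?_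
      by_cases h : (QuotientGroup.mk τ : Equiv.Perm (Fin 4) ⧸ H) = q
      · simp [h, Matrix.add_apply, add_mul]
      · simp [h]
    · intro k M N
      funext q
      show I2.mkQ _ = k • (I2.mkQ _)
      rw [← map_smul]
      congr 1
      rw [Finset.smul_sum]
      refine Finset.sum_congr rfl fun τ _ => ?_
      by_cases h : (QuotientGroup.mk τ : Equiv.Perm (Fin 4) ⧸ H) = q
      · simp [h, Matrix.smul_apply, smul_mul_assoc]
      · simp [h]
    · intro M N N'
      funext q
      show I2.mkQ _ = I2.mkQ _ + I2.mkQ _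
      rw [← map_add]
      congr 1
      rw [← Finset.sum_add_distrib]
      refine Finset.sum_congr rfl fun τ _ => ?_
      by_cases h : (QuotientGroup.mk τ : Equiv.Perm (Fin 4) ⧸ H) = q
      · simp [h, Matrix.add_apply, mul_add]
      · simp [h]
    · intro k M N
      funext q
      show I2.mkQ _ = k • (I2.mkQ _)
      rw [← map_smul]
      congr 1
      rw [Finset.smul_sum]
      refine Finset.sum_congr rfl fun τ _ => ?_
      by_cases h : (QuotientGroup.mk τ : Equiv.Perm (Fin 4) ⧸ H) = q
      · simp [h, Matrix.smul_apply, mul_smul_comm]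
      · simp [h]
  obtain ⟨B2, hB2⟩ := hB2ex
  have hψ : ∀ u v : L, (B2.compl₁₂ φ.toLinearMap φ.toLinearMap) u v = B2 (φ u) (φ v) :=
    fun u v => rfl
  have hs0 : (Equiv.swap (0:Fin 4) 2) 0 = 2 := by decide
  have hs1 : (Equiv.swap (0:Fin 4) 2) 1 = 1 := by decide
  have hs2 : (Equiv.swap (0:Fin 4) 2) 2 = 0 := by decide
  have hs3 : (Equiv.swap (0:Fin 4) 2) 3 = 3 := by decide
  have ht0 : (Equiv.swap (1:Fin 4) 3) 0 = 0 := by decide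
  have ht1 : (Equiv.swap (1:Fin 4) 3) 1 = 3 := by decide
  have ht2 : (Equiv.swap (1:Fin 4) 3) 2 = 2 := by decide
  have ht3 : (Equiv.swap (1:Fin 4) 3) 3 = 1 := by decide
  refine ⟨B2.compl₁₂ φ.toLinearMap φ.toLinearMap, ?_, ?_, ?_, ?_, ?_⟩
  -- (1) values on generators with pairwise distinct indices
  · intro σ a b
    funext q
    rw [hψ, hφ', hφ', hB2]
    rw [Finset.sum_eq_single_of_mem σ (Finset.mem_univ σ)]
    · rw [Matrix.single_apply_same, Matrix.single_apply_same]
      by_cases h : (QuotientGroup.mk σ : Equiv.Perm (Fin 4) ⧸ H) = q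
      · rw [if_pos h, ← h, Function.update_self]
        rfl
      · rw [if_neg h, Function.update_of_ne (Ne.symm h)]
        simp
    · intro τ _ hτ
      have hne : ¬((σ 0 = τ 0 ∧ σ 1 = τ 1) ∧ (σ 2 = τ 2 ∧ σ 3 = τ 3)) := by
        rintro ⟨⟨h0, h1⟩, ⟨h2, h3⟩⟩
        apply hτ
        apply Equiv.ext
        intro m
        fin_cases m
        · exact h0.symm
        · exact h1.symm
        · exact h2.symm
        · exact h3.symm
      rcases not_and_or.mp hne with h | h
      · simp [Matrix.single_apply_of_ne _ _ _ _ _ h]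
      · simp [Matrix.single_apply_of_ne _ _ _ _ _ h]
  -- (2) vanishing on other pairs of generators
  · intro i j k l hij hkl hn a b
    funext q
    rw [hψ, hφ', hφ', hB2]
    rw [Finset.sum_eq_zero]
    · simp
    intro τ _
    by_cases h1 : i = τ 0 ∧ j = τ 1
    · by_cases h2 : k = τ 2 ∧ l = τ 3
      · exfalso
        obtain ⟨hi, hj⟩ := h1
        obtain ⟨hk, hl⟩ := h2
        subst hi; subst hj; subst hk; subst hl
        exact hn ⟨(Equiv.injective τ).ne (by decide), (Equiv.injective τ).ne (by decide),
          (Equiv.injective τ).ne (by decide), (Equiv.injective τ).ne (by decide)⟩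
      · simp [Matrix.single_apply_of_ne _ _ _ _ _ h2]
    · simp [Matrix.single_apply_of_ne _ _ _ _ _ h1]
  -- (3) vanishing on the subalgebra 𝔗
  · intro i j hij a b x
    funext q
    have hbr : (⁅Matrix.single i j a, Matrix.single j i b⁆ :
        Matrix (Fin 4) (Fin 4) R)
        = Matrix.single i i (a * b) - Matrix.single j j (b * a) := by
      rw [Ring.lie_def, Matrix.single_mul_single_same, Matrix.single_mul_single_same]
    rw [hψ, LieHom.map_lie, hφ', hφ', hbr, hB2]
    rw [Finset.sum_eq_zero]
    · simp
    intro τ _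
    have h01 : τ 0 ≠ τ 1 := (Equiv.injective τ).ne (by decide)
    have hii : ¬(i = τ 0 ∧ i = τ 1) := fun h => h01 (h.1.symm.trans h.2)
    have hjj : ¬(j = τ 0 ∧ j = τ 1) := fun h => h01 (h.1.symm.trans h.2)
    rw [Matrix.sub_apply, Matrix.single_apply_of_ne _ _ _ _ _ hii,
      Matrix.single_apply_of_ne _ _ _ _ _ hjj]
    simp
  -- (4) alternating
  · intro x
    funext q
    obtain ⟨σ, rfl⟩ := QuotientGroup.mk_surjective q
    rw [hψ, hB2,
      coset_sum H hH σ (fun τ => (φ x : Matrix (Fin 4) (Fin 4) R) (τ 0) (τ 1) *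
        (φ x : Matrix (Fin 4) (Fin 4) R) (τ 2) (τ 3))]
    simp only [Equiv.Perm.mul_apply, hs0, hs1, hs2, hs3, ht0, ht1, ht2, ht3, Pi.zero_apply]
    rw [Submodule.mkQ_apply, Submodule.Quotient.mk_eq_zero]
    convert add_mem
      (hpair ((φ x : Matrix (Fin 4) (Fin 4) R) (σ 0) (σ 1))
        ((φ x : Matrix (Fin 4) (Fin 4) R) (σ 2) (σ 3)))
      (hpair ((φ x : Matrix (Fin 4) (Fin 4) R) (σ 2) (σ 1))
        ((φ x : Matrix (Fin 4) (Fin 4) R) (σ 0) (σ 3))) using 1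
    abel
  -- (5) cocycle identity
  · intro x y z
    funext q
    obtain ⟨σ, rfl⟩ := QuotientGroup.mk_surjective q
    have d01 : σ 0 ≠ σ 1 := (Equiv.injective σ).ne (by decide)
    have d02 : σ 0 ≠ σ 2 := (Equiv.injective σ).ne (by decide)
    have d03 : σ 0 ≠ σ 3 := (Equiv.injective σ).ne (by decide)
    have d12 : σ 1 ≠ σ 2 := (Equiv.injective σ).ne (by decide)
    have d13 : σ 1 ≠ σ 3 := (Equiv.injective σ).ne (by decide)
    have d23 : σ 2 ≠ σ 3 := (Equiv.injective σ).ne (by decide)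
    have hA := htr x
    have hBt := htr y
    have hCt := htr z
    rw [sum_univ_four' d01 d02 d03 d12 d13 d23] at hA hBt hCt
    simp only [Pi.add_apply, Pi.zero_apply]
    rw [hψ, hψ, hψ, LieHom.map_lie, LieHom.map_lie, LieHom.map_lie, hB2, hB2, hB2,
      coset_sum H hH σ (fun τ => (⁅φ x, φ y⁆ : Matrix (Fin 4) (Fin 4) R) (τ 0) (τ 1) *
        (φ z : Matrix (Fin 4) (Fin 4) R) (τ 2) (τ 3)),
      coset_sum H hH σ (fun τ => (⁅φ y, φ z⁆ : Matrix (Fin 4) (Fin 4) R) (τ 0) (τ 1) *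
        (φ x : Matrix (Fin 4) (Fin 4) R) (τ 2) (τ 3)),
      coset_sum H hH σ (fun τ => (⁅φ z, φ x⁆ : Matrix (Fin 4) (Fin 4) R) (τ 0) (τ 1) *
        (φ y : Matrix (Fin 4) (Fin 4) R) (τ 2) (τ 3))]
    simp only [Ring.lie_def, Matrix.sub_apply, Matrix.mul_apply, Equiv.Perm.mul_apply,
      hs0, hs1, hs2, hs3, ht0, ht1, ht2, ht3,
      sum_univ_four' d01 d02 d03 d12 d13 d23]
    rw [← map_add, ← map_add, Submodule.mkQ_apply, Submodule.Quotient.mk_eq_zero]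
    exact keyIdentity I2 h2g hcg hmulg (φ x) (φ y) (φ z) (σ 0) (σ 1) (σ 2) (σ 3)
      hA hBt hCt
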